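/- Row-bumping lemma: Let T be a semistandard Young tableau and let x, x' be values row-inserted successively, first x into T (creating box B) and then x' into T ← x (creating box B'). If x ≤ x' then B is strictly left of and weakly below B'; if x > x' then B' is weakly left of and strictly below B. -/

import Mathlib

/-- Row-bump `x` into a row: returns the bumped entry (if any) and the new row.
The leftmost entry strictly greater than `x` is bumped. -/
def bump (x : ℕ) : List ℕ → Option ℕ × List ℕ
  | [] => (none, [x])
  | y :: ys =>
    if x < y then (some y, x :: ys)
    else
      let p := bump x ys
      (p.1, y :: p.2)

/-- RSK row insertion of a value into a tableau (list of rows, top row first). -/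
def rowInsert : List (List ℕ) → ℕ → List (List ℕ)
  | [], x => [[x]]
  | r :: rs, x =>
    match bump x r with
    | (none, r') => r' :: rs
    | (some y, r') => r' :: rowInsert rs y

/-- `t` is a semistandard Young tableau: rows weakly increase left to right,
row lengths weakly decrease top to bottom, columns strictly increase top to
bottom, and all rows are nonempty. -/
def IsSSYT (t : List (List ℕ)) : Prop :=
  (∀ r ∈ t, List.Pairwise (· ≤ ·) r) ∧
  (∀ i, i + 1 < t.length → (t.getD (i + 1) []).length ≤ (t.getD i []).length) ∧
  (∀ i j, i + 1 < t.length → j < (t.getD (i + 1) []).length →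
    (t.getD i []).getD j 0 < (t.getD (i + 1) []).getD j 0) ∧
  (∀ r ∈ t, r ≠ [])

/-- Index of the first position where two lists differ. -/
def firstDiff : List ℕ → List ℕ → ℕ
  | x :: xs, y :: ys => if x = y then firstDiff xs ys + 1 else 0
  | _, _ => 0

/-- The shape (list of row lengths) of a tableau. -/
def shape (t : List (List ℕ)) : List ℕ := t.map List.length

/-- The (row, column) coordinates (0-indexed, rows numbered top to bottom) of
the box created when the tableau `told` becomes `tnew` by a row insertion. -/
def newBox (told tnew : List (List ℕ)) : ℕ × ℕ :=
  let i := firstDiff (shape told) (shape tnew)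
  (i, (shape tnew).getD i 0 - 1)

/- ===== auxiliary lemmas ===== -/

lemma bump_cons_pos {x w : ℕ} {ws : List ℕ} (h : x < w) :
    bump x (w :: ws) = (some w, x :: ws) := by simp [bump, h]

lemma bump_cons_neg {x w : ℕ} {ws : List ℕ} (h : ¬ x < w) :
    bump x (w :: ws) = ((bump x ws).1, w :: (bump x ws).2) := by simp [bump, h]

lemma bump_none_snd {x : ℕ} : ∀ {l : List ℕ}, (bump x l).1 = none → (bump x l).2 = l ++ [x]
  | [], _ => rfl
  | w :: ws, h => by
    by_cases hxw : x < w
    · rw [bump_cons_pos hxw] at h; simp at h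
    · rw [bump_cons_neg hxw] at h ⊢
      have h1 : (bump x ws).1 = none := h
      simp [bump_none_snd h1]

lemma bump_none_le {x : ℕ} : ∀ {l : List ℕ}, (bump x l).1 = none → ∀ z ∈ l, z ≤ x
  | [], _, z, hz => by simp at hz
  | w :: ws, h, z, hz => by
    by_cases hxw : x < w
    · rw [bump_cons_pos hxw] at h; simp at h
    · rw [bump_cons_neg hxw] at h
      have h1 : (bump x ws).1 = none := h
      rcases List.mem_cons.mp hz with rfl | hz'
      · omega
      · exact bump_none_le h1 z hz'

lemma bump_some_mem {x y : ℕ} : ∀ {l : List ℕ}, (bump x l).1 = some y → y ∈ l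
  | [], h => by simp [bump] at h
  | w :: ws, h => by
    by_cases hxw : x < w
    · rw [bump_cons_pos hxw] at h
      obtain rfl : w = y := by simpa using h
      exact List.mem_cons_self
    · rw [bump_cons_neg hxw] at h
      exact List.mem_cons_of_mem _ (bump_some_mem h)

lemma bump_some_lt {x y : ℕ} : ∀ {l : List ℕ}, (bump x l).1 = some y → x < y
  | [], h => by simp [bump] at h
  | w :: ws, h => by
    by_cases hxw : x < w
    · rw [bump_cons_pos hxw] at h
      obtain rfl : w = y := by simpa using h
      exact hxw
    · rw [bump_cons_neg hxw] at h
      exact bump_some_lt (l := ws) h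

lemma bump_some_mem_new {x y : ℕ} : ∀ {l : List ℕ}, (bump x l).1 = some y → x ∈ (bump x l).2
  | [], h => by simp [bump] at h
  | w :: ws, h => by
    by_cases hxw : x < w
    · rw [bump_cons_pos hxw]
      exact List.mem_cons_self
    · rw [bump_cons_neg hxw] at h ⊢
      exact List.mem_cons_of_mem _ (bump_some_mem_new (l := ws) h)

lemma bump_some_len {x y : ℕ} : ∀ {l : List ℕ}, (bump x l).1 = some y → (bump x l).2.length = l.length
  | [], h => by simp [bump] at h
  | w :: ws, h => by
    by_cases hxw : x < w
    · rw [bump_cons_pos hxw]; rfl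
    · rw [bump_cons_neg hxw] at h ⊢
      simp [bump_some_len (l := ws) h]

lemma bump_some_le {x y : ℕ} : ∀ {l : List ℕ}, List.Pairwise (· ≤ ·) l →
    (bump x l).1 = some y → ∀ z ∈ l, x < z → y ≤ z
  | [], _, h, _, _, _ => by simp [bump] at h
  | w :: ws, hs, h, z, hz, hxz => by
    by_cases hxw : x < w
    · rw [bump_cons_pos hxw] at h
      obtain rfl : w = y := by simpa using h
      rcases List.mem_cons.mp hz with rfl | hz'
      · exact le_refl _
      · exact (List.pairwise_cons.mp hs).1 z hz'
    · rw [bump_cons_neg hxw] at h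
      rcases List.mem_cons.mp hz with rfl | hz'
      · omega
      · exact bump_some_le (List.pairwise_cons.mp hs).2 h z hz' hxz

lemma bump_bump_le {x x' y y' : ℕ} : ∀ {l : List ℕ}, List.Pairwise (· ≤ ·) l → x ≤ x' →
    (bump x l).1 = some y → (bump x' (bump x l).2).1 = some y' → y ≤ y'
  | [], _, _, h, _ => by simp [bump] at h
  | w :: ws, hs, hxx', h, h' => by
    by_cases hxw : x < w
    · rw [bump_cons_pos hxw] at h h'
      obtain rfl : w = y := by simpa using h
      have h'' : (bump x' (x :: ws)).1 = some y' := h'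
      rw [bump_cons_neg (by omega)] at h''
      have h3 : (bump x' ws).1 = some y' := h''
      exact (List.pairwise_cons.mp hs).1 y' (bump_some_mem h3)
    · rw [bump_cons_neg hxw] at h h'
      have h2 : (bump x ws).1 = some y := h
      have h'' : (bump x' (w :: (bump x ws).2)).1 = some y' := h'
      rw [bump_cons_neg (by omega)] at h''
      have h3 : (bump x' (bump x ws).2).1 = some y' := h''
      exact bump_bump_le (List.pairwise_cons.mp hs).2 hxx' h2 h3

lemma bump_bump_lt {x x' y y' : ℕ} : ∀ {l : List ℕ}, List.Pairwise (· ≤ ·) l → x' < x →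
    (bump x l).1 = some y → (bump x' (bump x l).2).1 = some y' → y' < y
  | [], _, _, h, _ => by simp [bump] at h
  | w :: ws, hs, hx, h, h' => by
    by_cases hxw : x < w
    · rw [bump_cons_pos hxw] at h h'
      obtain rfl : w = y := by simpa using h
      have h'' : (bump x' (x :: ws)).1 = some y' := h'
      rw [bump_cons_pos hx] at h''
      obtain rfl : x = y' := by simpa using h''
      exact hxw
    · rw [bump_cons_neg hxw] at h h'
      have h2 : (bump x ws).1 = some y := h
      have h'' : (bump x' (w :: (bump x ws).2)).1 = some y' := h'
      by_cases hx'w : x' < w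
      · rw [bump_cons_pos hx'w] at h''
        obtain rfl : w = y' := by simpa using h''
        have := bump_some_lt h2
        omega
      · rw [bump_cons_neg hx'w] at h''
        have h3 : (bump x' (bump x ws).2).1 = some y' := h''
        exact bump_bump_lt (List.pairwise_cons.mp hs).2 hx h2 h3

lemma rowInsert_cons_none {x : ℕ} {r : List ℕ} {rs : List (List ℕ)} (h : (bump x r).1 = none) :
    rowInsert (r :: rs) x = (r ++ [x]) :: rs := by
  have h2 := bump_none_snd h
  rw [rowInsert, show bump x r = (none, r ++ [x]) from Prod.ext h h2]

lemma rowInsert_cons_some {x y : ℕ} {r : List ℕ} {rs : List (List ℕ)} (h : (bump x r).1 = some y) :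
    rowInsert (r :: rs) x = (bump x r).2 :: rowInsert rs y := by
  rcases hb : bump x r with ⟨o, r2⟩
  rw [hb] at h
  obtain rfl : o = some y := h
  rw [rowInsert, hb]

lemma newBox_cons_none {x : ℕ} {r : List ℕ} {rs : List (List ℕ)} (h : (bump x r).1 = none) :
    newBox (r :: rs) (rowInsert (r :: rs) x) = (0, r.length) := by
  rw [rowInsert_cons_none h]
  simp [newBox, shape, firstDiff]

lemma newBox_cons_some {r r2 : List ℕ} {rs ts : List (List ℕ)} (hlen : r2.length = r.length) :
    newBox (r :: rs) (r2 :: ts) = ((newBox rs ts).1 + 1, (newBox rs ts).2) := by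
  simp [newBox, shape, firstDiff, hlen.symm]

lemma ssyt_tail {r : List ℕ} {rs : List (List ℕ)} (h : IsSSYT (r :: rs)) : IsSSYT rs := by
  obtain ⟨h1, h2, h3, h4⟩ := h
  refine ⟨fun s hs => h1 s (List.mem_cons_of_mem _ hs), fun i hi => ?_,
    fun i j hi hj => ?_, fun s hs => h4 s (List.mem_cons_of_mem _ hs)⟩
  · have := h2 (i + 1) (by simp; omega)
    simpa using this
  · have := h3 (i + 1) j (by simp; omega) (by simpa using hj)
    simpa using this

lemma ssyt_len0 {r : List ℕ} {rs : List (List ℕ)} (h : IsSSYT (r :: rs)) :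
    (rs.getD 0 []).length ≤ r.length := by
  rcases rs with _ | ⟨s, rs'⟩
  · simp
  · have := h.2.1 0 (by simp)
    simpa using this

lemma ssyt_col0 {r : List ℕ} {rs : List (List ℕ)} (h : IsSSYT (r :: rs)) {j : ℕ}
    (hj : j < (rs.getD 0 []).length) :
    r.getD j 0 < (rs.getD 0 []).getD j 0 := by
  rcases rs with _ | ⟨s, rs'⟩
  · simp at hj
  · have := h.2.2.1 0 j (by simp) (by simpa using hj)
    simpa using this

lemma sorted_getD_le {l : List ℕ} (hs : List.Pairwise (· ≤ ·) l) {i j : ℕ} (hij : i ≤ j)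
    (hj : j < l.length) : l.getD i 0 ≤ l.getD j 0 := by
  rw [List.getD_eq_getElem l 0 (lt_of_le_of_lt hij hj), List.getD_eq_getElem l 0 hj]
  rcases eq_or_lt_of_le hij with rfl | h
  · exact le_refl _
  · exact List.Pairwise.rel_get_of_lt hs (by simpa using h)

lemma mem_le_getD_last {l : List ℕ} (hs : List.Pairwise (· ≤ ·) l) {y : ℕ} (hy : y ∈ l) :
    y ≤ l.getD (l.length - 1) 0 := by
  obtain ⟨i, hi, rfl⟩ := List.mem_iff_getElem.mp hy
  rw [← List.getD_eq_getElem l 0 hi]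
  exact sorted_getD_le hs (by omega) (by omega)

lemma term_col_le : ∀ (t : List (List ℕ)), IsSSYT t → ∀ (x c : ℕ),
    (∀ j, c ≤ j → j < (t.getD 0 []).length → x < (t.getD 0 []).getD j 0) →
    (newBox t (rowInsert t x)).2 ≤ c
  | [], _, x, c, _ => by simp [rowInsert, newBox, shape, firstDiff]
  | r :: rs, hT, x, c, hc => by
    have hsr : List.Pairwise (· ≤ ·) r := hT.1 r (List.mem_cons_self)
    rcases ho : (bump x r).1 with _ | y
    · rw [newBox_cons_none ho]
      by_contra hlt
      push_neg at hlt
      have hcr : c < r.length := hlt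
      have hm : r.getD c 0 ∈ r := by
        rw [List.getD_eq_getElem r 0 hcr]; exact List.getElem_mem _
      have h1 := bump_none_le ho _ hm
      have h2 := hc c (le_refl _) (by simpa using hcr)
      simp only [List.getD_cons_zero] at h2
      omega
    · rw [rowInsert_cons_some ho, newBox_cons_some (bump_some_len ho)]
      refine term_col_le rs (ssyt_tail hT) y c (fun j hcj hj => ?_)
      have hjr : j < r.length := lt_of_lt_of_le hj (ssyt_len0 hT)
      have hxr : x < r.getD j 0 := by
        have := hc j hcj (by simpa using hjr)
        simpa using this
      have hmem : r.getD j 0 ∈ r := by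
        rw [List.getD_eq_getElem r 0 hjr]; exact List.getElem_mem _
      have hy : y ≤ r.getD j 0 := bump_some_le hsr ho _ hmem hxr
      have hcol := ssyt_col0 hT hj
      omega

lemma row_bump_main : ∀ (T : List (List ℕ)), IsSSYT T → ∀ (x x' : ℕ),
    (x ≤ x' →
      (newBox T (rowInsert T x)).2 < (newBox (rowInsert T x) (rowInsert (rowInsert T x) x')).2 ∧
      (newBox (rowInsert T x) (rowInsert (rowInsert T x) x')).1 ≤ (newBox T (rowInsert T x)).1) ∧
    (x' < x →
      (newBox (rowInsert T x) (rowInsert (rowInsert T x) x')).2 ≤ (newBox T (rowInsert T x)).2 ∧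
      (newBox T (rowInsert T x)).1 < (newBox (rowInsert T x) (rowInsert (rowInsert T x) x')).1)
  | [], _, x, x' => by
    constructor
    · intro hxx'
      rw [show rowInsert [] x = [[x]] from rfl]
      rw [show rowInsert [[x]] x' = [[x, x']] by
        rw [rowInsert, bump_cons_neg (by omega), show bump x' [] = (none, [x']) from rfl]]
      simp [newBox, shape, firstDiff]
    · intro hx'x
      rw [show rowInsert [] x = [[x]] from rfl]
      rw [show rowInsert [[x]] x' = [[x'], [x]] by
        rw [rowInsert, bump_cons_pos hx'x]; rfl]
      simp [newBox, shape, firstDiff]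
  | r :: rs, hT, x, x' => by
    have hsr : List.Pairwise (· ≤ ·) r := hT.1 r (List.mem_cons_self)
    have hrs : IsSSYT rs := ssyt_tail hT
    have hrne : r ≠ [] := hT.2.2.2 r (List.mem_cons_self)
    have hrlen : 0 < r.length := List.length_pos_iff.mpr hrne
    rcases ho : (bump x r).1 with _ | y
    · -- x appended to first row
      have hB := newBox_cons_none (rs := rs) ho
      rw [rowInsert_cons_none ho] at hB ⊢
      rcases ho2 : (bump x' (r ++ [x])).1 with _ | y'
      · -- x' also appended
        have hB' := newBox_cons_none (rs := rs) ho2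
        rw [rowInsert_cons_none ho2] at hB' ⊢
        rw [hB, hB']
        constructor
        · intro _; simp
        · intro hx'x
          exfalso
          have := bump_none_le ho2 x (by simp)
          omega
      · -- x' bumps y' from the first row
        have hB' := newBox_cons_some (rs := rs) (ts := rowInsert rs y') (bump_some_len ho2)
        rw [rowInsert_cons_some ho2]
        rw [hB, hB']
        constructor
        · intro hxx'
          exfalso
          have hy'm := bump_some_mem ho2
          have hy'lt := bump_some_lt ho2
          rcases List.mem_append.mp hy'm with hm | hm
          · have := bump_none_le ho y' hm
            omega
          · simp at hm
            omega
        · intro hx'x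
          refine ⟨?_, by omega⟩
          have := term_col_le rs hrs y' r.length (fun j hj hj2 => ?_)
          · simpa using this
          · exfalso
            have := ssyt_len0 hT
            omega
    · -- x bumps y from the first row
      have hB := newBox_cons_some (rs := rs) (ts := rowInsert rs y) (bump_some_len ho)
      rw [rowInsert_cons_some ho]
      rw [hB]
      rcases ho2 : (bump x' (bump x r).2).1 with _ | y'
      · -- x' appended to new first row
        have hB' := newBox_cons_none (rs := rowInsert rs y) ho2
        rw [rowInsert_cons_none ho2] at hB' ⊢
        rw [hB']
        have hlen2 : (bump x r).2.length = r.length := bump_some_len ho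
        constructor
        · intro hxx'
          refine ⟨?_, by omega⟩
          have hcol : (newBox rs (rowInsert rs y)).2 ≤ r.length - 1 := by
            refine term_col_le rs hrs y (r.length - 1) (fun j hj hj2 => ?_)
            have hjr : j < r.length := lt_of_lt_of_le hj2 (ssyt_len0 hT)
            have hje : j = r.length - 1 := by omega
            subst hje
            have hy1 : y ≤ r.getD (r.length - 1) 0 :=
              mem_le_getD_last hsr (bump_some_mem ho)
            have hcol := ssyt_col0 hT hj2
            omega
          rw [hlen2]
          omega
        · intro hx'x
          exfalso
          have := bump_none_le ho2 x (bump_some_mem_new ho)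
          omega
      · -- x' bumps y' from the new first row
        have hB' := newBox_cons_some (rs := rowInsert rs y)
          (ts := rowInsert (rowInsert rs y) y') (bump_some_len ho2)
        rw [rowInsert_cons_some ho2]
        rw [hB']
        have IH := row_bump_main rs hrs y y'
        constructor
        · intro hxx'
          have hy := bump_bump_le hsr hxx' ho ho2
          obtain ⟨hc, hr⟩ := IH.1 hy
          exact ⟨hc, by omega⟩
        · intro hx'x
          have hy := bump_bump_lt hsr hx'x ho ho2
          obtain ⟨hc, hr⟩ := IH.2 hy
          exact ⟨hc, by omega⟩

/-- **Row-bumping lemma**: inserting `x` then `x'` into a semistandard tableau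
creates boxes `B` then `B'`.  If `x ≤ x'` then `B` is strictly left of and
weakly below `B'`; if `x > x'` then `B'` is weakly left of and strictly below
`B`. -/
theorem row_bumping_lemma (T : List (List ℕ)) (hT : IsSSYT T) (x x' : ℕ) :
    (x ≤ x' →
      (newBox T (rowInsert T x)).2 < (newBox (rowInsert T x) (rowInsert (rowInsert T x) x')).2 ∧
      (newBox (rowInsert T x) (rowInsert (rowInsert T x) x')).1 ≤ (newBox T (rowInsert T x)).1) ∧
    (x' < x →
      (newBox (rowInsert T x) (rowInsert (rowInsert T x) x')).2 ≤ (newBox T (rowInsert T x)).2 ∧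
      (newBox T (rowInsert T x)).1 < (newBox (rowInsert T x) (rowInsert (rowInsert T x) x')).1) := row_bump_main T hT x x'
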